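/- arXiv:2511.14623 — 4 statements merged into one kernel-verified Lean document; each statement's English description precedes it below -/
import Mathlib

section
/- Let X, Y, Z be real normed vector spaces, let J : X × Y → ℝ and R : X × Y → Z be Fréchet differentiable, and let u : X → Y be Fréchet differentiable with R(σ, u(σ)) = 0 for all σ ∈ X. Fix σ ∈ X and let w : Z → ℝ be a continuous linear functional satisfying the adjoint equation w ∘ ∂₂R(σ, u(σ)) = −∂₂J(σ, u(σ)) as continuous linear maps from Y to ℝ. Then the Fréchet derivative at σ of the reduced objective σ' ↦ J(σ', u(σ')) equals ∂₁J(σ, u(σ)) + w ∘ ∂₁R(σ, u(σ)). -/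
/-- Adjoint-method sensitivity formula: if `R (σ, u σ) = 0` for all `σ` and the
continuous linear functional `w` solves the adjoint equation
`w ∘ ∂₂R(σ, u σ) = −∂₂J(σ, u σ)`, then the Fréchet derivative of the reduced
objective `σ' ↦ J (σ', u σ')` at `σ` equals `∂₁J(σ, u σ) + w ∘ ∂₁R(σ, u σ)`. -/
theorem stmt_2 {X Y Z : Type*} [NormedAddCommGroup X] [NormedSpace ℝ X]
    [NormedAddCommGroup Y] [NormedSpace ℝ Y]
    [NormedAddCommGroup Z] [NormedSpace ℝ Z]
    (J : X × Y → ℝ) (R : X × Y → Z) (u : X → Y)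
    (hJ : Differentiable ℝ J) (hR : Differentiable ℝ R)
    (hu : Differentiable ℝ u)
    (hstate : ∀ σ : X, R (σ, u σ) = 0)
    (σ : X) (w : Z →L[ℝ] ℝ)
    (hadj : w.comp (fderiv ℝ (fun y => R (σ, y)) (u σ))
      = -(fderiv ℝ (fun y => J (σ, y)) (u σ))) :
    fderiv ℝ (fun σ' => J (σ', u σ')) σ
      = fderiv ℝ (fun σ' => J (σ', u σ)) σ
        + w.comp (fderiv ℝ (fun σ' => R (σ', u σ)) σ) := by
  have hJp := (hJ (σ, u σ)).hasFDerivAt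
  have hRp := (hR (σ, u σ)).hasFDerivAt
  have hup := (hu σ).hasFDerivAt
  set DJ := fderiv ℝ J (σ, u σ) with hDJ
  set DR := fderiv ℝ R (σ, u σ) with hDR
  set Du := fderiv ℝ u σ with hDu
  -- derivative of σ' ↦ (σ', u σ')
  have hprod : HasFDerivAt (fun σ' : X => (σ', u σ'))
      ((ContinuousLinearMap.id ℝ X).prod Du) σ := HasFDerivAt.prodMk (hasFDerivAt_id σ) hup
  have hred : fderiv ℝ (fun σ' => J (σ', u σ')) σ
      = DJ.comp ((ContinuousLinearMap.id ℝ X).prod Du) := (hJp.comp σ hprod).fderiv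
  -- derivative of σ' ↦ (σ', u σ)
  have hconst : HasFDerivAt (fun σ' : X => (σ', u σ))
      ((ContinuousLinearMap.id ℝ X).prod 0) σ :=
    HasFDerivAt.prodMk (hasFDerivAt_id σ) (hasFDerivAt_const _ _)
  have h1J : fderiv ℝ (fun σ' => J (σ', u σ)) σ
      = DJ.comp ((ContinuousLinearMap.id ℝ X).prod 0) := (hJp.comp σ hconst).fderiv
  have h1R : fderiv ℝ (fun σ' => R (σ', u σ)) σ
      = DR.comp ((ContinuousLinearMap.id ℝ X).prod 0) := (hRp.comp σ hconst).fderiv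
  -- derivative of y ↦ (σ, y)
  have hconst2 : HasFDerivAt (fun y : Y => ((σ : X), y))
      ((0 : Y →L[ℝ] X).prod (ContinuousLinearMap.id ℝ Y)) (u σ) :=
    HasFDerivAt.prodMk (hasFDerivAt_const _ _) (hasFDerivAt_id _)
  have h2J : fderiv ℝ (fun y => J (σ, y)) (u σ)
      = DJ.comp ((0 : Y →L[ℝ] X).prod (ContinuousLinearMap.id ℝ Y)) :=
    (hJp.comp (u σ) hconst2).fderiv
  have h2R : fderiv ℝ (fun y => R (σ, y)) (u σ)
      = DR.comp ((0 : Y →L[ℝ] X).prod (ContinuousLinearMap.id ℝ Y)) :=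
    (hRp.comp (u σ) hconst2).fderiv
  -- state constraint: derivative of σ' ↦ R (σ', u σ') vanishes
  have hzero : DR.comp ((ContinuousLinearMap.id ℝ X).prod Du) = 0 := by
    have h1 : fderiv ℝ (fun σ' => R (σ', u σ')) σ
        = DR.comp ((ContinuousLinearMap.id ℝ X).prod Du) := (hRp.comp σ hprod).fderiv
    have h2 : (fun σ' => R (σ', u σ')) = fun _ => (0 : Z) := funext hstate
    rw [← h1, h2, fderiv_fun_const]
    rfl
  rw [h2J, h2R] at hadj
  rw [hred, h1J, h1R]
  ext x
  have hz := congrArg (fun (f : X →L[ℝ] Z) => w (f x)) hzero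
  have ha := congrArg (fun (f : Y →L[ℝ] ℝ) => f (Du x)) hadj
  simp only [ContinuousLinearMap.comp_apply, ContinuousLinearMap.prod_apply,
    ContinuousLinearMap.id_apply, ContinuousLinearMap.zero_apply,
    ContinuousLinearMap.add_apply, ContinuousLinearMap.neg_apply,
    ContinuousLinearMap.coe_zero, Pi.zero_apply, map_zero] at hz ha ⊢
  have hsplitJ : DJ (x, Du x) = DJ (x, 0) + DJ (0, Du x) := by
    rw [← map_add]; norm_num
  have hsplitR : DR (x, Du x) = DR (x, 0) + DR (0, Du x) := by
    rw [← map_add]; norm_num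
  rw [hsplitR] at hz
  simp only [map_add] at hz
  rw [hsplitJ]
  linarith
end

section
/- Let X be a real normed vector space, H a real Hilbert space, f ∈ H, a : X → (H →L[ℝ] H) a Fréchet differentiable family of continuous linear operators such that each a(σ) is self-adjoint, and u : X → H Fréchet differentiable with a(σ)(u(σ)) = f for all σ ∈ X. Then the compliance map σ ↦ ⟪f, u(σ)⟫ is Fréchet differentiable, and its derivative at σ in direction h ∈ X equals −⟪(Da(σ) h)(u(σ)), u(σ)⟫, where Da(σ) is the Fréchet derivative of a at σ. -/
open scoped RealInnerProductSpace

/-- Adjoint-method sensitivity for compliance: with self-adjoint state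
operators `a σ` and state equation `a σ (u σ) = f`, the compliance map
`σ ↦ ⟪f, u σ⟫` is Fréchet differentiable and its derivative at `σ` in
direction `h` equals `−⟪(Da(σ) h)(u σ), u σ⟫`. -/
theorem stmt_4 {X H : Type*} [NormedAddCommGroup X] [NormedSpace ℝ X]
    [NormedAddCommGroup H] [InnerProductSpace ℝ H] [CompleteSpace H]
    (f : H) (a : X → (H →L[ℝ] H)) (u : X → H)
    (ha : Differentiable ℝ a)
    (hsa : ∀ (σ : X) (v w : H), ⟪a σ v, w⟫ = ⟪v, a σ w⟫)
    (hu : Differentiable ℝ u)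
    (hstate : ∀ σ : X, a σ (u σ) = f) :
    Differentiable ℝ (fun σ => ⟪f, u σ⟫) ∧
      ∀ (σ : X) (h : X),
        fderiv ℝ (fun σ' => ⟪f, u σ'⟫) σ h
          = -⟪(fderiv ℝ a σ h) (u σ), u σ⟫ := by
  refine ⟨(differentiable_const f).inner ℝ hu, fun σ h => ?_⟩
  have h1 : HasFDerivAt (fun σ' => a σ' (u σ'))
      ((a σ).comp (fderiv ℝ u σ) + (fderiv ℝ a σ).flip (u σ)) σ :=
    (ha σ).hasFDerivAt.clm_apply (hu σ).hasFDerivAt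
  have h2 : HasFDerivAt (fun σ' => a σ' (u σ')) (0 : X →L[ℝ] H) σ := by
    have he : (fun σ' => a σ' (u σ')) = fun _ => f := funext hstate
    rw [he]; exact hasFDerivAt_const f σ
  have key : a σ (fderiv ℝ u σ h) + (fderiv ℝ a σ h) (u σ) = 0 := by
    have := congrArg (fun L : X →L[ℝ] H => L h) (h1.unique h2)
    simpa using this
  have hA : a σ (fderiv ℝ u σ h) = -((fderiv ℝ a σ h) (u σ)) :=
    eq_neg_of_add_eq_zero_left key
  have hder : fderiv ℝ (fun σ' => ⟪f, u σ'⟫) σ h = ⟪f, fderiv ℝ u σ h⟫ := by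
    rw [fderiv_inner_apply ℝ (differentiableAt_const f) (hu σ)]
    simp
  rw [hder, ← hstate σ, hsa σ, hA, inner_neg_right, real_inner_comm]
end

section
/- Let X be a real normed vector space, H a real Hilbert space, f ∈ H, a : X → (H →L[ℝ] H) a Fréchet differentiable family of continuous linear operators such that each a(σ) is self-adjoint, and u : X → H Fréchet differentiable with a(σ)(u(σ)) = f for all σ ∈ X. Then the strain-energy map σ ↦ ⟪a(σ)(u(σ)), u(σ)⟫ is Fréchet differentiable, and its derivative at σ in direction h equals −⟪(Da(σ) h)(u(σ)), u(σ)⟫; that is, the total derivative is the exact negative of the explicit partial derivative h ↦ ⟪(Da(σ) h)(u(σ)), u(σ)⟫ obtained by differentiating only the operator occurrence while holding the state u(σ) fixed. -/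
open scoped RealInnerProductSpace

/-- Sign-reversal identity for compliance minimization: the total derivative of
the strain-energy map `σ ↦ ⟪a σ (u σ), u σ⟫` is the exact negative of the
explicit partial derivative `h ↦ ⟪(Da(σ) h)(u σ), u σ⟫`. -/
theorem stmt_5 {X H : Type*} [NormedAddCommGroup X] [NormedSpace ℝ X]
    [NormedAddCommGroup H] [InnerProductSpace ℝ H] [CompleteSpace H]
    (f : H) (a : X → (H →L[ℝ] H)) (u : X → H)
    (ha : Differentiable ℝ a)
    (hsa : ∀ (σ : X) (v w : H), ⟪a σ v, w⟫ = ⟪v, a σ w⟫)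
    (hu : Differentiable ℝ u)
    (hstate : ∀ σ : X, a σ (u σ) = f) :
    Differentiable ℝ (fun σ => ⟪a σ (u σ), u σ⟫) ∧
      ∀ (σ : X) (h : X),
        fderiv ℝ (fun σ' => ⟪a σ' (u σ'), u σ'⟫) σ h
          = -⟪(fderiv ℝ a σ h) (u σ), u σ⟫ := by
  have hfun : (fun σ => ⟪a σ (u σ), u σ⟫) = fun σ => ⟪f, u σ⟫ := by
    funext σ; rw [hstate]
  have hdiff : Differentiable ℝ (fun σ => ⟪f, u σ⟫) := by
    exact fun σ => ((innerSL ℝ f).hasFDerivAt.comp σ (hu σ).hasFDerivAt).differentiableAt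
  refine ⟨hfun ▸ hdiff, fun σ h => ?_⟩
  -- derivative of the constant map σ ↦ a σ (u σ) is zero
  have hAu : HasFDerivAt (fun σ' => a σ' (u σ'))
      ((a σ).comp (fderiv ℝ u σ) + ((fderiv ℝ a σ).flip (u σ))) σ :=
    (ha σ).hasFDerivAt.clm_apply (hu σ).hasFDerivAt
  have hconst : (fun σ' => a σ' (u σ')) = fun _ => f := funext hstate
  have hzero : ((a σ).comp (fderiv ℝ u σ) + ((fderiv ℝ a σ).flip (u σ))) = 0 := by
    have := hAu.unique (hconst ▸ hasFDerivAt_const f σ)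
    simpa using this
  have hkey : a σ (fderiv ℝ u σ h) + (fderiv ℝ a σ h) (u σ) = 0 := by
    have := congrArg (fun T => T h) hzero
    simpa using this
  have hF : HasFDerivAt (fun σ' => ⟪a σ' (u σ'), u σ'⟫)
      ((innerSL ℝ f).comp (fderiv ℝ u σ)) σ := by
    rw [hfun]
    exact (innerSL ℝ f).hasFDerivAt.comp σ (hu σ).hasFDerivAt
  rw [hF.fderiv]
  have h2 : a σ (fderiv ℝ u σ h) = -((fderiv ℝ a σ h) (u σ)) :=
    eq_neg_of_add_eq_zero_left hkey
  have h1 : ⟪f, fderiv ℝ u σ h⟫ = -⟪(fderiv ℝ a σ h) (u σ), u σ⟫ := by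
    rw [← hstate σ, hsa σ (u σ) (fderiv ℝ u σ h), h2, inner_neg_right,
      real_inner_comm]
  simpa using h1
end

section
/- Let X be a real normed vector space, H a real Hilbert space, and a, m : X → (H →L[ℝ] H) Fréchet differentiable families of continuous linear operators such that each a(σ) and each m(σ) is self-adjoint. Let u : X → H be Fréchet differentiable and λ : X → ℝ be such that a(σ)(u(σ)) = λ(σ) · m(σ)(u(σ)) and ⟪m(σ)(u(σ)), u(σ)⟫ = 1 for all σ ∈ X. Then λ(σ) = ⟪a(σ)(u(σ)), u(σ)⟫ for all σ, λ is Fréchet differentiable, and its derivative at σ in direction h equals ⟪(Da(σ) h)(u(σ)), u(σ)⟫ − λ(σ) · ⟪(Dm(σ) h)(u(σ)), u(σ)⟫; in particular the derivative of λ contains no contribution from the derivative of the eigenmode u. -/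
open scoped RealInnerProductSpace

/-- Sensitivity of a mass-normalized generalized eigenvalue: if
`a σ (u σ) = l σ • m σ (u σ)` and `⟪m σ (u σ), u σ⟫ = 1` for all `σ`, then
`l σ = ⟪a σ (u σ), u σ⟫`, `l` is Fréchet differentiable, and its derivative in
direction `h` is `⟪(Da(σ) h)(u σ), u σ⟫ − l σ * ⟪(Dm(σ) h)(u σ), u σ⟫`,
containing no contribution from the derivative of the eigenmode `u`. -/
theorem stmt_8 {X H : Type*} [NormedAddCommGroup X] [NormedSpace ℝ X]
    [NormedAddCommGroup H] [InnerProductSpace ℝ H] [CompleteSpace H]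
    (a m : X → (H →L[ℝ] H)) (u : X → H) (l : X → ℝ)
    (ha : Differentiable ℝ a) (hm : Differentiable ℝ m)
    (hsa : ∀ (σ : X) (v w : H), ⟪a σ v, w⟫ = ⟪v, a σ w⟫)
    (hsm : ∀ (σ : X) (v w : H), ⟪m σ v, w⟫ = ⟪v, m σ w⟫)
    (hu : Differentiable ℝ u)
    (heig : ∀ σ : X, a σ (u σ) = l σ • m σ (u σ))
    (hnorm : ∀ σ : X, ⟪m σ (u σ), u σ⟫ = 1) :
    (∀ σ : X, l σ = ⟪a σ (u σ), u σ⟫) ∧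
      Differentiable ℝ l ∧
      ∀ (σ : X) (h : X),
        fderiv ℝ l σ h
          = ⟪(fderiv ℝ a σ h) (u σ), u σ⟫
            - l σ * ⟪(fderiv ℝ m σ h) (u σ), u σ⟫ := by
  have hfa : ∀ σ, DifferentiableAt ℝ (fun τ => a τ (u τ)) σ := fun σ =>
    (ha σ).clm_apply (hu σ)
  have hfm : ∀ σ, DifferentiableAt ℝ (fun τ => m τ (u τ)) σ := fun σ =>
    (hm σ).clm_apply (hu σ)
  have part1 : ∀ σ : X, l σ = ⟪a σ (u σ), u σ⟫ := by
    intro σ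
    rw [heig σ, real_inner_smul_left, hnorm σ, mul_one]
  have hl : l = fun σ => ⟪a σ (u σ), u σ⟫ := funext part1
  have hdiff : Differentiable ℝ l := by
    rw [hl]
    exact fun σ => DifferentiableAt.inner ℝ (hfa σ) (hu σ)
  refine ⟨part1, hdiff, fun σ h => ?_⟩
  -- derivative of the normalization constraint
  have hconst : (fun τ => ⟪m τ (u τ), u τ⟫) = fun _ : X => (1 : ℝ) := funext hnorm
  have hGzero : fderiv ℝ (fun τ => ⟪m τ (u τ), u τ⟫) σ h = 0 := by
    rw [hconst, fderiv_fun_const]; simp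
  have hG : fderiv ℝ (fun τ => ⟪m τ (u τ), u τ⟫) σ h
      = ⟪m σ (u σ), fderiv ℝ u σ h⟫ + ⟪fderiv ℝ (fun τ => m τ (u τ)) σ h, u σ⟫ :=
    fderiv_inner_apply ℝ (hfm σ) (hu σ) h
  have hmclm : fderiv ℝ (fun τ => m τ (u τ)) σ h
      = m σ (fderiv ℝ u σ h) + (fderiv ℝ m σ h) (u σ) := by
    rw [fderiv_clm_apply (hm σ) (hu σ)]
    simp
  have haclm : fderiv ℝ (fun τ => a τ (u τ)) σ h
      = a σ (fderiv ℝ u σ h) + (fderiv ℝ a σ h) (u σ) := by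
    rw [fderiv_clm_apply (ha σ) (hu σ)]
    simp
  have hF : fderiv ℝ l σ h
      = ⟪a σ (u σ), fderiv ℝ u σ h⟫ + ⟪fderiv ℝ (fun τ => a τ (u τ)) σ h, u σ⟫ := by
    rw [hl]
    exact fderiv_inner_apply ℝ (hfa σ) (hu σ) h
  set v := u σ
  set w := fderiv ℝ u σ h
  -- symmetry facts
  have hsym_m : ⟪m σ w, v⟫ = ⟪m σ v, w⟫ := by rw [hsm σ w v, real_inner_comm]
  have hsym_a : ⟪a σ w, v⟫ = ⟪a σ v, w⟫ := by rw [hsa σ w v, real_inner_comm]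
  have heig' : ∀ z : H, ⟪a σ v, z⟫ = l σ * ⟪m σ v, z⟫ := by
    intro z
    rw [heig σ, real_inner_smul_left]
  have hG' : ⟪m σ v, w⟫ + (⟪m σ w, v⟫ + ⟪(fderiv ℝ m σ h) v, v⟫) = 0 := by
    rw [← hGzero, hG, hmclm, inner_add_left]
  have hcons : 2 * ⟪m σ v, w⟫ = -⟪(fderiv ℝ m σ h) v, v⟫ := by
    rw [hsym_m] at hG'; linarith
  rw [hF, haclm, inner_add_left, hsym_a, heig' w]
  linear_combination (l σ) * hcons
end
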